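/- Let r ≥ 2, 0 ≤ α ≤ 1 - 1/r, and let G be a simple graph on n vertices. Let x = (x_1, …, x_n) be a non-negative unit eigenvector of A_α(G) corresponding to λ_α(G), and let w be a vertex with x_w = min{x_1, …, x_n}. Then λ_α(G - w) ≥ λ_α(G)·(1 - 2x_w²)/(1 - x_w²) - α·(1 - n·x_w²)/(1 - x_w²). -/

import Mathlib

open Finset Matrix

noncomputable def Aalpha {V : Type*} [Fintype V] [DecidableEq V]
    (G : SimpleGraph V) [DecidableRel G.Adj] (α : ℝ) : Matrix V V ℝ :=
  α • Matrix.diagonal (fun v => (G.degree v : ℝ)) + (1 - α) • G.adjMatrix ℝ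

noncomputable def lamAlpha {V : Type*} [Fintype V] [DecidableEq V]
    (G : SimpleGraph V) [DecidableRel G.Adj] (α : ℝ) : ℝ :=
  sSup (spectrum ℝ (Aalpha G α))

instance {V : Type*} (G : SimpleGraph V) [DecidableRel G.Adj] (s : Set V) :
    DecidableRel (G.induce s).Adj := fun a b =>
  inferInstanceAs (Decidable (G.Adj a.1 b.1))

lemma rayleigh_le {m : Type*} [Fintype m] [DecidableEq m] [Nonempty m]
    {M : Matrix m m ℝ} (hM : M.IsHermitian) (y : m → ℝ) :
    y ⬝ᵥ M.mulVec y ≤ sSup (spectrum ℝ M) * (y ⬝ᵥ y) := by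
  set U := (hM.eigenvectorUnitary : Matrix m m ℝ) with hU
  have hmem : U ∈ Matrix.unitaryGroup m ℝ := SetLike.coe_mem _
  have hUU : U * star U = 1 := (Matrix.mem_unitaryGroup_iff).mp hmem
  have hstar : star U = Uᵀ := by
    rw [Matrix.star_eq_conjTranspose, Matrix.conjTranspose_eq_transpose_of_trivial]
  set z := Uᵀ *ᵥ y with hz
  have hzy : z = y ᵥ* U := by rw [hz, Matrix.mulVec_transpose]
  have hdiag : (RCLike.ofReal ∘ hM.eigenvalues : m → ℝ) = hM.eigenvalues := rfl
  have h1 : y ⬝ᵥ M.mulVec y = ∑ i, hM.eigenvalues i * z i ^ 2 := by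
    conv_lhs => rw [hM.spectral_theorem]
    simp only [Unitary.conjStarAlgAut_apply, Unitary.coe_star]
    rw [hstar, hdiag, ← Matrix.mulVec_mulVec, ← Matrix.mulVec_mulVec,
      Matrix.dotProduct_mulVec, ← hzy, ← hz]
    simp only [dotProduct, Matrix.mulVec_diagonal]
    exact Finset.sum_congr rfl fun i _ => by ring
  have h2 : y ⬝ᵥ y = ∑ i, z i ^ 2 := by
    have : U *ᵥ z = y := by
      rw [hz, Matrix.mulVec_mulVec, ← hstar, hUU, Matrix.one_mulVec]
    calc y ⬝ᵥ y = y ⬝ᵥ (U *ᵥ z) := by rw [this]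
      _ = (y ᵥ* U) ⬝ᵥ z := Matrix.dotProduct_mulVec y U z
      _ = ∑ i, z i ^ 2 := by rw [← hzy]; simp [dotProduct, pow_two]
  have h3 : ∀ i, hM.eigenvalues i ≤ sSup (spectrum ℝ M) := fun i =>
    le_csSup (Matrix.finite_spectrum M).bddAbove (hM.eigenvalues_mem_spectrum_real i)
  rw [h1, h2, Finset.mul_sum]
  exact Finset.sum_le_sum fun i _ =>
    mul_le_mul_of_nonneg_right (h3 i) (sq_nonneg _)

lemma degree_eq_sum {V : Type*} [Fintype V] [DecidableEq V]
    (H : SimpleGraph V) [DecidableRel H.Adj] (u : V) :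
    (H.degree u : ℝ) = ∑ v, (if H.Adj u v then (1:ℝ) else 0) := by
  rw [Finset.sum_boole, SimpleGraph.degree, SimpleGraph.neighborFinset_eq_filter]

lemma quad_form {V : Type*} [Fintype V] [DecidableEq V]
    (H : SimpleGraph V) [DecidableRel H.Adj] (α : ℝ) (z : V → ℝ) :
    z ⬝ᵥ (Aalpha H α).mulVec z =
      α * ∑ u, (∑ v, (if H.Adj u v then (1:ℝ) else 0)) * z u ^ 2
      + (1 - α) * ∑ u, ∑ v, (if H.Adj u v then (1:ℝ) else 0) * (z u * z v) := by
  simp only [Aalpha, Matrix.add_mulVec, Matrix.smul_mulVec, dotProduct,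
    Pi.add_apply, Pi.smul_apply, smul_eq_mul, Matrix.mulVec_diagonal,
    SimpleGraph.adjMatrix_mulVec_apply]
  rw [Finset.mul_sum, Finset.mul_sum, ← Finset.sum_add_distrib]
  refine Finset.sum_congr rfl fun u _ => ?_
  rw [← degree_eq_sum, SimpleGraph.neighborFinset_eq_filter, Finset.sum_filter]
  have : (∑ v, (if H.Adj u v then (1:ℝ) else 0) * (z u * z v))
      = z u * ∑ v, (if H.Adj u v then z v else 0) := by
    rw [Finset.mul_sum]
    exact Finset.sum_congr rfl fun v _ => by by_cases h : H.Adj u v <;> simp [h]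
  rw [this]; ring

lemma aalpha_isHermitian {V : Type*} [Fintype V] [DecidableEq V]
    (H : SimpleGraph V) [DecidableRel H.Adj] (α : ℝ) : (Aalpha H α).IsHermitian := by
  unfold Aalpha
  rw [Matrix.IsHermitian, Matrix.conjTranspose_eq_transpose_of_trivial,
    Matrix.transpose_add, Matrix.transpose_smul, Matrix.transpose_smul,
    Matrix.diagonal_transpose, (SimpleGraph.isSymm_adjMatrix H)]

theorem lamAlpha_delete_min_vertex {n : ℕ} (hn : 2 ≤ n) (r : ℕ) (hr : 2 ≤ r)
    (G : SimpleGraph (Fin n)) [DecidableRel G.Adj]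
    (α : ℝ) (h0 : 0 ≤ α) (h1 : α ≤ 1 - 1 / r)
    (x : Fin n → ℝ) (hxnn : ∀ v, 0 ≤ x v) (hunit : ∑ v, x v ^ 2 = 1)
    (heig : (Aalpha G α).mulVec x = lamAlpha G α • x)
    (w : Fin n) (hw : ∀ v, x w ≤ x v) :
    lamAlpha (G.induce {v | v ≠ w}) α ≥
      lamAlpha G α * (1 - 2 * x w ^ 2) / (1 - x w ^ 2)
        - α * (1 - n * x w ^ 2) / (1 - x w ^ 2) := by
  classical
  set lam := lamAlpha G α with hlamdef
  set s := x w with hs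
  set a : Fin n → Fin n → ℝ := fun u v => if G.Adj u v then 1 else 0 with ha
  have ha0 : ∀ u v, 0 ≤ a u v := fun u v => by dsimp [a]; split <;> norm_num
  have ha1 : ∀ u v, a u v ≤ 1 := fun u v => by dsimp [a]; split <;> norm_num
  have hsym : ∀ u v, a u v = a v u := fun u v =>
    if_congr (G.adj_comm u v) rfl rfl
  have haww : a w w = 0 := by simp [a]
  -- basic inequalities
  have hsq : ∀ v, s ^ 2 ≤ x v ^ 2 := fun v => by
    have := hw v; nlinarith [hxnn w]
  have hns : (n : ℝ) * s ^ 2 ≤ 1 := by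
    calc (n : ℝ) * s ^ 2 = ∑ _v : Fin n, s ^ 2 := by
          rw [Finset.sum_const, Finset.card_univ, Fintype.card_fin, nsmul_eq_mul]
      _ ≤ ∑ v, x v ^ 2 := Finset.sum_le_sum fun v _ => hsq v
      _ = 1 := hunit
  have hn2 : (2 : ℝ) ≤ (n : ℝ) := by exact_mod_cast hn
  have hden : 0 < 1 - s ^ 2 := by nlinarith [sq_nonneg s]
  -- the subtype is nonempty
  obtain ⟨v₀, hv₀⟩ := Fintype.exists_ne_of_one_lt_card (by rw [Fintype.card_fin]; omega : 1 < Fintype.card (Fin n)) w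
  haveI : Nonempty ({v : Fin n | v ≠ w} : Set (Fin n)) := ⟨⟨v₀, hv₀⟩⟩
  -- restricted vector
  set y : ({v : Fin n | v ≠ w} : Set (Fin n)) → ℝ := fun v => x v.1 with hy
  -- sums over the subtype are sums over univ.erase w
  have hconv : ∀ f : Fin n → ℝ,
      (∑ v : ({v : Fin n | v ≠ w} : Set (Fin n)), f v.1) = ∑ v ∈ univ.erase w, f v :=
    fun f => (Finset.sum_subtype _ (by simp) f).symm
  -- global quantities
  set D2 := ∑ u, (∑ v, a u v) * x u ^ 2 with hD2
  set E2 := ∑ u, ∑ v, a u v * (x u * x v) with hE2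
  set P := ∑ v, a w v * x v with hP
  set T := ∑ v, a w v * x v ^ 2 with hT
  set dw := ∑ v, a w v with hdw
  -- λ = quadratic form of x
  have hxx : x ⬝ᵥ x = 1 := by
    simpa [dotProduct, pow_two] using hunit
  have hlam : α * D2 + (1 - α) * E2 = lam := by
    have h := quad_form G α x
    rw [heig, dotProduct_smul, smul_eq_mul, hxx, mul_one] at h
    exact h.symm
  -- eigen equation at w
  have heigw : α * dw * s + (1 - α) * P = lam * s := by
    have h := congrFun heig w
    simp only [Aalpha, Matrix.add_mulVec, Matrix.smul_mulVec, Pi.add_apply,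
      Pi.smul_apply, smul_eq_mul, Matrix.mulVec_diagonal,
      SimpleGraph.adjMatrix_mulVec_apply] at h
    rw [degree_eq_sum, SimpleGraph.neighborFinset_eq_filter, Finset.sum_filter] at h
    have e1 : (∑ v, if G.Adj w v then x v else 0) = P := by
      rw [hP]; exact Finset.sum_congr rfl fun v _ => by by_cases hv : G.Adj w v <;> simp [a, hv]
    have e2 : (∑ v, if G.Adj w v then (1:ℝ) else 0) = dw := rfl
    rw [e1, e2] at h
    calc α * dw * s + (1 - α) * P = α * (dw * s) + (1 - α) * P := by ring
      _ = lam * s := h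
  -- restricted sums
  have herase : ∀ f : Fin n → ℝ, ∑ v ∈ univ.erase w, f v = (∑ v, f v) - f w := by
    intro f
    have := Finset.sum_erase_add univ f (Finset.mem_univ w)
    linarith
  -- quadratic form of the induced graph
  set H := G.induce ({v : Fin n | v ≠ w} : Set (Fin n)) with hH
  have hadj : ∀ (u v : ({v : Fin n | v ≠ w} : Set (Fin n))),
      (if H.Adj u v then (1:ℝ) else 0) = a u.1 v.1 := by
    intro u v
    by_cases huv : G.Adj u.1 v.1 <;> simp [hH, a, huv]
  have hQ : y ⬝ᵥ (Aalpha H α).mulVec y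
      = α * (D2 - dw * s ^ 2 - T) + (1 - α) * (E2 - 2 * s * P) := by
    rw [quad_form H α y]
    have hE' : (∑ u : ({v : Fin n | v ≠ w} : Set (Fin n)),
        ∑ v : ({v : Fin n | v ≠ w} : Set (Fin n)),
          (if H.Adj u v then (1:ℝ) else 0) * (y u * y v)) = E2 - 2 * s * P := by
      have step1 : ∀ u : Fin n,
          (∑ v ∈ univ.erase w, a u v * (x u * x v))
            = (∑ v, a u v * (x u * x v)) - a u w * (x u * s) := fun u => herase _
      calc (∑ u : ({v : Fin n | v ≠ w} : Set (Fin n)),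
            ∑ v : ({v : Fin n | v ≠ w} : Set (Fin n)),
              (if H.Adj u v then (1:ℝ) else 0) * (y u * y v))
          = ∑ u ∈ univ.erase w, ∑ v ∈ univ.erase w, a u v * (x u * x v) := by
            rw [← hconv (fun u => ∑ v ∈ univ.erase w, a u v * (x u * x v))]
            refine Finset.sum_congr rfl fun u _ => ?_
            rw [← hconv (fun v => a u.1 v * (x u.1 * x v))]
            exact Finset.sum_congr rfl fun v _ => by rw [hadj]
        _ = ∑ u ∈ univ.erase w,
              ((∑ v, a u v * (x u * x v)) - a u w * (x u * s)) :=
            Finset.sum_congr rfl fun u _ => step1 u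
        _ = E2 - 2 * s * P := by
            rw [Finset.sum_sub_distrib, herase, herase, hE2]
            have e3 : (∑ v, a w v * (s * x v)) = s * P := by
              rw [hP, Finset.mul_sum]; exact Finset.sum_congr rfl fun v _ => by ring
            have e4 : (∑ u, a u w * (x u * s)) = s * P := by
              rw [hP, Finset.mul_sum]
              exact Finset.sum_congr rfl fun u _ => by rw [hsym u w]; ring
            rw [e3, e4, haww]; ring
    have hD' : (∑ u : ({v : Fin n | v ≠ w} : Set (Fin n)),
        (∑ v : ({v : Fin n | v ≠ w} : Set (Fin n)),
          (if H.Adj u v then (1:ℝ) else 0)) * y u ^ 2) = D2 - dw * s ^ 2 - T := by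
      calc (∑ u : ({v : Fin n | v ≠ w} : Set (Fin n)),
            (∑ v : ({v : Fin n | v ≠ w} : Set (Fin n)),
              (if H.Adj u v then (1:ℝ) else 0)) * y u ^ 2)
          = ∑ u ∈ univ.erase w, (∑ v ∈ univ.erase w, a u v) * x u ^ 2 := by
            rw [← hconv (fun u => (∑ v ∈ univ.erase w, a u v) * x u ^ 2)]
            refine Finset.sum_congr rfl fun u _ => ?_
            have h1 : (∑ v : ({v : Fin n | v ≠ w} : Set (Fin n)),
                (if H.Adj u v then (1:ℝ) else 0)) = ∑ v ∈ univ.erase w, a u.1 v := by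
              rw [← hconv (fun v => a u.1 v)]
              exact Finset.sum_congr rfl fun v _ => hadj u v
            rw [h1]
        _ = ∑ u ∈ univ.erase w, (((∑ v, a u v) - a u w) * x u ^ 2) := by
            refine Finset.sum_congr rfl fun u _ => ?_
            rw [herase]
        _ = D2 - dw * s ^ 2 - T := by
            have expand : ∀ u, ((∑ v, a u v) - a u w) * x u ^ 2
                = (∑ v, a u v) * x u ^ 2 - a u w * x u ^ 2 := fun u => by ring
            rw [Finset.sum_congr rfl fun u _ => expand u, Finset.sum_sub_distrib,
              herase, herase, hD2]
            have e5 : (∑ u, a u w * x u ^ 2) = T := by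
              rw [hT]; exact Finset.sum_congr rfl fun u _ => by rw [hsym u w]
            rw [e5, haww, hdw]; ring
    rw [hE', hD']
  -- Q = λ(1-2s²) + α(dw s² - T)
  have hkey : y ⬝ᵥ (Aalpha H α).mulVec y = lam * (1 - 2 * s ^ 2) + α * (dw * s ^ 2 - T) := by
    rw [hQ]; linear_combination hlam - 2 * s * heigw
  -- bound on T
  have hTbound : T - dw * s ^ 2 ≤ 1 - n * s ^ 2 := by
    have e6 : T - dw * s ^ 2 = ∑ v, a w v * (x v ^ 2 - s ^ 2) := by
      rw [hT, hdw, Finset.sum_mul, ← Finset.sum_sub_distrib]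
      exact Finset.sum_congr rfl fun v _ => by ring
    have e7 : (1 : ℝ) - n * s ^ 2 = ∑ v, (x v ^ 2 - s ^ 2) := by
      rw [Finset.sum_sub_distrib, hunit, Finset.sum_const, Finset.card_univ,
        Fintype.card_fin, nsmul_eq_mul]
    rw [e6, e7]
    refine Finset.sum_le_sum fun v _ => ?_
    have := hsq v
    nlinarith [ha0 w v, ha1 w v]
  -- norm of y
  have hyy : y ⬝ᵥ y = 1 - s ^ 2 := by
    have : y ⬝ᵥ y = ∑ v ∈ univ.erase w, x v ^ 2 := by
      rw [← hconv (fun v => x v ^ 2)]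
      simp [dotProduct, hy, pow_two]
    rw [this, herase, hunit]
  -- Rayleigh bound
  have hray := rayleigh_le (aalpha_isHermitian H α) y
  rw [hyy, hkey] at hray
  have hlam' : lamAlpha H α = sSup (spectrum ℝ (Aalpha H α)) := rfl
  have final : (lam * (1 - 2 * s ^ 2) - α * (1 - n * s ^ 2)) / (1 - s ^ 2) ≤ lamAlpha H α := by
    rw [div_le_iff₀ hden]
    have hstep := mul_le_mul_of_nonneg_left
      (by linarith [hTbound] : -(1 - (n:ℝ) * s ^ 2) ≤ dw * s ^ 2 - T) h0
    calc lam * (1 - 2 * s ^ 2) - α * (1 - n * s ^ 2)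
        ≤ lam * (1 - 2 * s ^ 2) + α * (dw * s ^ 2 - T) := by nlinarith [hstep]
      _ ≤ lamAlpha H α * (1 - s ^ 2) := hray
  rw [ge_iff_le, ← sub_div]
  exact final
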